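/- arXiv:1210.2845 — 2 statements merged into one kernel-verified Lean document; each statement's English description precedes it below -/
import Mathlib

section
/- (Uniqueness of the symmetry operator and complementary states.) Let ρ_1,…,ρ_N be density matrices on ℂ^d with prior probabilities q_x ≥ 0, Σ_x q_x = 1. Suppose K and K̄ are Hermitian d×d matrices, S_1,…,S_N and S̄_1,…,S̄_N are positive semidefinite matrices with K = q_x ρ_x + S_x and K̄ = q_x ρ_x + S̄_x for every x, and there exist N-outcome POVMs (M_x) and (M̄_x) with K = Σ_x q_x ρ_x M_x and K̄ = Σ_x q_x ρ_x M̄_x. Then K = K̄, and consequently S_x = S̄_x for every x. -/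
open BigOperators Matrix
open scoped ComplexOrder


lemma aux_diag_nonneg {d : ℕ} {A : Matrix (Fin d) (Fin d) ℂ} (hA : A.PosSemidef) (i : Fin d) :
    0 ≤ A i i := by
  exact hA.diag_nonneg

lemma aux_trace_nonneg {d : ℕ} {A : Matrix (Fin d) (Fin d) ℂ} (hA : A.PosSemidef) :
    0 ≤ A.trace :=
  Finset.sum_nonneg fun i _ => aux_diag_nonneg hA i

lemma aux_eq_zero_of_trace {d : ℕ} {A : Matrix (Fin d) (Fin d) ℂ}
    (h : (Aᴴ * A).trace = 0) : A = 0 := by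
  have hd : ∀ j ∈ Finset.univ, (0:ℂ) ≤ (Aᴴ * A) j j :=
    fun j _ => aux_diag_nonneg (Matrix.posSemidef_conjTranspose_mul_self A) j
  rw [Matrix.trace] at h
  have h := (Finset.sum_eq_zero_iff_of_nonneg hd).mp h
  ext i j
  have hjj := h j (Finset.mem_univ j)
  have : dotProduct (star fun i => A i j) (fun i => A i j) = 0 := by
    simpa [Matrix.mul_apply, Matrix.diag, dotProduct, Matrix.conjTranspose_apply,
      mul_comm] using hjj
  have := dotProduct_star_self_eq_zero.mp this
  exact congrFun this i

open scoped MatrixOrder in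
lemma aux_trace_mul_nonneg {d : ℕ} {A B : Matrix (Fin d) (Fin d) ℂ}
    (hA : A.PosSemidef) (hB : B.PosSemidef) :
    0 ≤ (A * B).trace ∧ ((A * B).trace = 0 → A * B = 0) := by
  set a := CFC.sqrt A with ha
  set b := CFC.sqrt B with hb
  have haH : aᴴ = a := (CFC.sqrt_nonneg A).posSemidef.1
  have hbH : bᴴ = b := (CFC.sqrt_nonneg B).posSemidef.1
  have haa : a * a = A := CFC.sqrt_mul_sqrt_self A hA.nonneg
  have hbb : b * b = B := CFC.sqrt_mul_sqrt_self B hB.nonneg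
  have key : (A * B).trace = ((b * a)ᴴ * (b * a)).trace := by
    rw [Matrix.conjTranspose_mul, haH, hbH]
    have e1 : A * B = (a * a * b) * b := by rw [← haa, ← hbb]; simp only [Matrix.mul_assoc]
    have e2 : b * (a * a * b) = (b * a) * (a * b) := by simp only [Matrix.mul_assoc]
    rw [e1, Matrix.trace_mul_comm, e2, Matrix.trace_mul_comm]
  constructor
  · rw [key]; exact aux_trace_nonneg (Matrix.posSemidef_conjTranspose_mul_self _)
  · intro h
    rw [key] at h
    have hba : b * a = 0 := aux_eq_zero_of_trace h
    have hab : a * b = 0 := by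
      have : (b * a)ᴴ = 0 := by rw [hba]; simp
      rwa [Matrix.conjTranspose_mul, haH, hbH] at this
    calc A * B = a * (a * b) * b := by rw [← haa, ← hbb]; noncomm_ring
    _ = 0 := by rw [hab]; simp

theorem symmetry_operator_unique'
    (d N : ℕ) (ρ : Fin N → Matrix (Fin d) (Fin d) ℂ)
    (q : Fin N → ℝ)
    (K Kbar : Matrix (Fin d) (Fin d) ℂ)
    (S Sbar : Fin N → Matrix (Fin d) (Fin d) ℂ)
    (hS : ∀ x, (S x).PosSemidef) (hSbar : ∀ x, (Sbar x).PosSemidef)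
    (hKS : ∀ x, K = (q x : ℂ) • ρ x + S x)
    (hKSbar : ∀ x, Kbar = (q x : ℂ) • ρ x + Sbar x)
    (M Mbar : Fin N → Matrix (Fin d) (Fin d) ℂ)
    (hM : (∀ x, (M x).PosSemidef) ∧ ∑ x, M x = 1)
    (hMbar : (∀ x, (Mbar x).PosSemidef) ∧ ∑ x, Mbar x = 1)
    (hach : K = ∑ x, (q x : ℂ) • (ρ x * M x))
    (hachbar : Kbar = ∑ x, (q x : ℂ) • (ρ x * Mbar x)) :
    K = Kbar ∧ ∀ x, S x = Sbar x := by
  have hqρ : ∀ x, (q x : ℂ) • ρ x = K - S x := fun x => by rw [hKS x]; abel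
  have hqρ' : ∀ x, (q x : ℂ) • ρ x = Kbar - Sbar x := fun x => by rw [hKSbar x]; abel
  have h1 : Kbar = K - ∑ x, S x * Mbar x := by
    rw [hachbar]
    have e : ∀ x ∈ Finset.univ, (q x : ℂ) • (ρ x * Mbar x) = K * Mbar x - S x * Mbar x :=
      fun x _ => by rw [← Matrix.smul_mul, hqρ x, Matrix.sub_mul]
    rw [Finset.sum_congr rfl e, Finset.sum_sub_distrib, ← Finset.mul_sum, hMbar.2, mul_one]
  have h2 : K = Kbar - ∑ x, Sbar x * M x := by
    rw [hach]
    have e : ∀ x ∈ Finset.univ, (q x : ℂ) • (ρ x * M x) = Kbar * M x - Sbar x * M x :=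
      fun x _ => by rw [← Matrix.smul_mul, hqρ' x, Matrix.sub_mul]
    rw [Finset.sum_congr rfl e, Finset.sum_sub_distrib, ← Finset.mul_sum, hM.2, mul_one]
  have e1 : ∑ x, S x * Mbar x = K - Kbar := by rw [h1]; abel
  have e2 : ∑ x, Sbar x * M x = Kbar - K := by rw [h2]; abel
  have h3 : (∑ x, S x * Mbar x) + (∑ x, Sbar x * M x) = 0 := by rw [e1, e2]; abel
  have ht : (∑ x, (S x * Mbar x).trace) + (∑ x, (Sbar x * M x).trace) = 0 := by
    have := congrArg Matrix.trace h3
    simpa [Matrix.trace_sum] using this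
  have hf : ∀ x ∈ Finset.univ, (0:ℂ) ≤ (S x * Mbar x).trace :=
    fun x _ => (aux_trace_mul_nonneg (hS x) (hMbar.1 x)).1
  have hg : ∀ x ∈ Finset.univ, (0:ℂ) ≤ (Sbar x * M x).trace :=
    fun x _ => (aux_trace_mul_nonneg (hSbar x) (hM.1 x)).1
  have hsf : (0:ℂ) ≤ ∑ x, (S x * Mbar x).trace := Finset.sum_nonneg hf
  have hsg : (0:ℂ) ≤ ∑ x, (Sbar x * M x).trace := Finset.sum_nonneg hg
  have hsf0 : ∑ x, (S x * Mbar x).trace = 0 := by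
    have hneg : ∑ x, (S x * Mbar x).trace = -∑ x, (Sbar x * M x).trace :=
      eq_neg_of_add_eq_zero_left ht
    exact le_antisymm (hneg ▸ neg_nonpos.mpr hsg) hsf
  have hf0 : ∀ x, (S x * Mbar x) = 0 := fun x =>
    (aux_trace_mul_nonneg (hS x) (hMbar.1 x)).2
      ((Finset.sum_eq_zero_iff_of_nonneg hf).mp hsf0 x (Finset.mem_univ x))
  have hKK : K = Kbar := by
    have : (0:Matrix (Fin d) (Fin d) ℂ) = K - Kbar := by
      rw [← e1, Finset.sum_eq_zero (fun x _ => hf0 x)]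
    have := this.symm
    rw [sub_eq_zero] at this
    exact this
  refine ⟨hKK, fun x => ?_⟩
  have := (hKS x).symm.trans (hKK.trans (hKSbar x))
  exact add_left_cancel this

/-- A density matrix: positive semidefinite with trace 1. -/
def IsDensityMatrix {d : ℕ} (ρ : Matrix (Fin d) (Fin d) ℂ) : Prop :=
  ρ.PosSemidef ∧ ρ.trace = 1

/-- An N-outcome POVM: positive semidefinite elements summing to the identity. -/
def IsPOVM {d N : ℕ} (M : Fin N → Matrix (Fin d) (Fin d) ℂ) : Prop :=
  (∀ x, (M x).PosSemidef) ∧ ∑ x, M x = 1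

/-- uniqueness of the symmetry operator and complementary states: if `K`
and `K̄` are Hermitian with `K = q_x ρ_x + S_x`, `K̄ = q_x ρ_x + S̄_x` for positive
semidefinite `S_x, S̄_x`, and both are achieved by POVMs as `K = Σ_x q_x ρ_x M_x`,
`K̄ = Σ_x q_x ρ_x M̄_x`, then `K = K̄` and `S_x = S̄_x` for every `x`. -/
theorem symmetry_operator_unique
    (d N : ℕ) (ρ : Fin N → Matrix (Fin d) (Fin d) ℂ)
    (hρ : ∀ x, IsDensityMatrix (ρ x))
    (q : Fin N → ℝ) (hq : ∀ x, 0 ≤ q x) (hq1 : ∑ x, q x = 1)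
    (K Kbar : Matrix (Fin d) (Fin d) ℂ)
    (hK : K.IsHermitian) (hKbar : Kbar.IsHermitian)
    (S Sbar : Fin N → Matrix (Fin d) (Fin d) ℂ)
    (hS : ∀ x, (S x).PosSemidef) (hSbar : ∀ x, (Sbar x).PosSemidef)
    (hKS : ∀ x, K = (q x : ℂ) • ρ x + S x)
    (hKSbar : ∀ x, Kbar = (q x : ℂ) • ρ x + Sbar x)
    (M Mbar : Fin N → Matrix (Fin d) (Fin d) ℂ)
    (hM : IsPOVM M) (hMbar : IsPOVM Mbar)
    (hach : K = ∑ x, (q x : ℂ) • (ρ x * M x))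
    (hachbar : Kbar = ∑ x, (q x : ℂ) • (ρ x * Mbar x)) :
    K = Kbar ∧ ∀ x, S x = Sbar x := by
  exact symmetry_operator_unique' d N ρ q K Kbar S Sbar hS hSbar hKS hKSbar M Mbar hM hMbar hach hachbar
end

section
/- (Isosceles triple of qubit pure states.) Fix θ₀ ∈ ℝ and θ ∈ [0, π/2]. Let |ψ_1⟩ = (cos((θ₀+θ)/2), sin((θ₀+θ)/2)), |ψ_2⟩ = (cos(θ₀/2), sin(θ₀/2)), |ψ_3⟩ = (cos((θ₀−θ)/2), sin((θ₀−θ)/2)) in ℂ², and ρ_x = |ψ_x⟩⟨ψ_x|. Then the guessing probability for ρ_1, ρ_2, ρ_3 with uniform prior probabilities 1/3 equals (1 + sin θ)/3; moreover this value is attained by the POVM M_1 = |φ_3⟩⟨φ_3|, M_2 = 0, M_3 = |φ_1⟩⟨φ_1|, where |φ_1⟩ = (cos(θ₀/2 − π/4), sin(θ₀/2 − π/4)) and |φ_3⟩ = (cos(θ₀/2 + π/4), sin(θ₀/2 + π/4)). -/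
open BigOperators Matrix Real
open scoped ComplexOrder

/-- The pure qubit state (projector) `|ψ⟩⟨ψ|` with `|ψ⟩ = (cos a, sin a)`. -/
noncomputable def pureState (a : ℝ) : Matrix (Fin 2) (Fin 2) ℂ :=
  Matrix.vecMulVec ![(Real.cos a : ℂ), (Real.sin a : ℂ)]
    (star ![(Real.cos a : ℂ), (Real.sin a : ℂ)])

lemma pure_apply (a : ℝ) (i j : Fin 2) :
    pureState a i j = ((![Real.cos a, Real.sin a] i * ![Real.cos a, Real.sin a] j : ℝ) : ℂ) := by
  fin_cases i <;> fin_cases j <;>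
    simp only [pureState, vecMulVec, Matrix.of_apply, Pi.star_apply, Matrix.cons_val_zero,
      Matrix.cons_val_one, Matrix.head_cons, RCLike.star_def, Complex.conj_ofReal,
      Complex.ofReal_mul, Fin.isValue, Fin.zero_eta, Fin.mk_one]

lemma pure_half (a : ℝ) : pureState (a/2) =
    !![(((1 + Real.cos a)/2 : ℝ) : ℂ), ((Real.sin a / 2 : ℝ) : ℂ);
       ((Real.sin a / 2 : ℝ) : ℂ), (((1 - Real.cos a)/2 : ℝ) : ℂ)] := by
  have hc : Real.cos (a/2) * Real.cos (a/2) = (1 + Real.cos a)/2 := by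
    have h := Real.cos_sq (a/2)
    rw [show 2 * (a/2) = a by ring] at h
    nlinarith [h]
  have hs : Real.sin (a/2) * Real.cos (a/2) = Real.sin a / 2 := by
    rw [show a = 2 * (a/2) by ring, Real.sin_two_mul]; ring_nf
  have hss : Real.sin (a/2) * Real.sin (a/2) = (1 - Real.cos a)/2 := by
    nlinarith [Real.sin_sq_add_cos_sq (a/2), hc]
  ext i j
  rw [pure_apply]
  fin_cases i <;> fin_cases j <;>
    simp only [Matrix.cons_val_zero, Matrix.cons_val_one, Matrix.head_cons, Fin.zero_eta,
      Fin.mk_one, Matrix.cons_val', Matrix.of_apply, Matrix.empty_val',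
      Matrix.cons_val_fin_one, Matrix.vecHead, Matrix.vecTail] <;>
    norm_cast <;> linarith [hc, hs, hss, mul_comm (Real.cos (a/2)) (Real.sin (a/2))]

lemma pure_psd (a : ℝ) : (pureState a).PosSemidef := by
  refine Matrix.PosSemidef.of_dotProduct_mulVec_nonneg ?_ ?_
  · ext i j
    rw [conjTranspose_apply, pure_apply, pure_apply]
    rw [RCLike.star_def, Complex.conj_ofReal, mul_comm]
  · intro x
    have h : star x ⬝ᵥ (pureState a) *ᵥ x =
        star ((starRingEnd ℂ) (Real.cos a) * x 0 + (starRingEnd ℂ) (Real.sin a) * x 1) *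
        ((starRingEnd ℂ) (Real.cos a) * x 0 + (starRingEnd ℂ) (Real.sin a) * x 1) := by
      simp [pureState, dotProduct, mulVec, vecMulVec, Fin.sum_univ_two, Complex.star_def]
      ring
    rw [h]
    exact star_mul_self_nonneg _

lemma trace_mul_pure_nonneg {M : Matrix (Fin 2) (Fin 2) ℂ} (hM : M.PosSemidef) (a : ℝ) :
    0 ≤ ((M * pureState a).trace).re := by
  have h := hM.dotProduct_mulVec_nonneg ![(Real.cos a : ℂ), (Real.sin a : ℂ)]
  have e : (M * pureState a).trace =
      star ![(Real.cos a : ℂ), (Real.sin a : ℂ)] ⬝ᵥ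
        M *ᵥ ![(Real.cos a : ℂ), (Real.sin a : ℂ)] := by
    simp [trace, Matrix.mul_apply, pureState, dotProduct, mulVec, vecMulVec,
      Fin.sum_univ_two, Complex.star_def, Matrix.diag]
    ring
  rw [e]
  exact (Complex.le_def.mp h).1

lemma trace_re_nonneg {M : Matrix (Fin 2) (Fin 2) ℂ} (hM : M.PosSemidef) :
    0 ≤ (M.trace).re := by
  have h0 := (Complex.le_def.mp (hM.dotProduct_mulVec_nonneg ![1, 0])).1
  have h1 := (Complex.le_def.mp (hM.dotProduct_mulVec_nonneg ![0, 1])).1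
  simp [dotProduct, mulVec, Fin.sum_univ_two] at h0 h1
  simp [trace, Fin.sum_univ_two, Matrix.diag]
  linarith [h0, h1]

lemma trace_pure (a : ℝ) : (pureState a).trace = 1 := by
  simp [trace, Matrix.diag, Fin.sum_univ_two, pure_apply]
  norm_cast
  nlinarith [Real.sin_sq_add_cos_sq a]

section cert
variable (θ₀ θ : ℝ)

noncomputable def Ymat : Matrix (Fin 2) (Fin 2) ℂ :=
  ((1/3 : ℝ) : ℂ) • pureState ((θ₀ + θ)/2) +
    ((Real.sin θ / 3 : ℝ) : ℂ) • pureState (θ₀/2 - Real.pi/4)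

lemma hY3 : Ymat θ₀ θ = ((1/3 : ℝ) : ℂ) • pureState ((θ₀ - θ)/2) +
    ((Real.sin θ / 3 : ℝ) : ℂ) • pureState (θ₀/2 + Real.pi/4) := by
  rw [Ymat, show θ₀/2 - Real.pi/4 = (θ₀ - Real.pi/2)/2 by ring,
    show θ₀/2 + Real.pi/4 = (θ₀ + Real.pi/2)/2 by ring,
    pure_half, pure_half, pure_half, pure_half]
  ext i j
  fin_cases i <;> fin_cases j <;>
    simp [Matrix.smul_apply, Real.cos_add, Real.sin_add, Real.cos_sub, Real.sin_sub] <;>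
    ring

lemma hY2 : Ymat θ₀ θ = ((1/3 : ℝ) : ℂ) • pureState (θ₀/2) +
    (((Real.sin θ + Real.cos θ - 1)/6 : ℝ) : ℂ) • (1 : Matrix (Fin 2) (Fin 2) ℂ) +
    (((1 - Real.cos θ)/3 : ℝ) : ℂ) • pureState (θ₀/2 + Real.pi/2) := by
  rw [Ymat, show θ₀/2 - Real.pi/4 = (θ₀ - Real.pi/2)/2 by ring,
    show θ₀/2 + Real.pi/2 = (θ₀ + Real.pi)/2 by ring,
    pure_half, pure_half, pure_half, pure_half]
  ext i j
  fin_cases i <;> fin_cases j <;>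
    simp [Matrix.smul_apply, Matrix.one_apply, Real.cos_add, Real.sin_add,
      Real.cos_sub, Real.sin_sub] <;>
    ring

lemma traceY : ((Ymat θ₀ θ).trace).re = (1 + Real.sin θ)/3 := by
  rw [Ymat, trace_add, trace_smul, trace_smul, trace_pure, trace_pure]
  simp [Complex.add_re, smul_eq_mul, Complex.sin_ofReal_re]
  ring

end cert

/-- isosceles triple of qubit pure states: for the states
`|ψ₁⟩, |ψ₂⟩, |ψ₃⟩` at angles `(θ₀+θ)/2, θ₀/2, (θ₀−θ)/2` with `θ ∈ [0, π/2]` and uniform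
priors `1/3`, the guessing probability is `(1 + sin θ)/3`, attained by the POVM
`M₁ = |φ₃⟩⟨φ₃|, M₂ = 0, M₃ = |φ₁⟩⟨φ₁|` with `φ₁, φ₃` at angles `θ₀/2 ∓ π/4`. -/
theorem isosceles_three_qubit_states
    (θ₀ θ : ℝ) (hθ : θ ∈ Set.Icc 0 (Real.pi / 2)) :
    IsGreatest {v : ℝ | ∃ M : Fin 3 → Matrix (Fin 2) (Fin 2) ℂ, IsPOVM M ∧
        v = ∑ x : Fin 3, (1 / 3 : ℝ) *
          ((M x * (![pureState ((θ₀ + θ) / 2), pureState (θ₀ / 2),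
              pureState ((θ₀ - θ) / 2)] x)).trace).re}
      ((1 + Real.sin θ) / 3) ∧
    IsPOVM (![pureState (θ₀ / 2 + Real.pi / 4), 0, pureState (θ₀ / 2 - Real.pi / 4)]) ∧
    ∑ x : Fin 3, (1 / 3 : ℝ) *
        (((![pureState (θ₀ / 2 + Real.pi / 4), 0, pureState (θ₀ / 2 - Real.pi / 4)] x) *
          (![pureState ((θ₀ + θ) / 2), pureState (θ₀ / 2),
              pureState ((θ₀ - θ) / 2)] x)).trace).re
      = (1 + Real.sin θ) / 3 := by
  obtain ⟨hθ0, hθ2⟩ := hθ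
  have hpi := Real.pi_pos
  have s0 : 0 ≤ Real.sin θ := Real.sin_nonneg_of_nonneg_of_le_pi hθ0 (by linarith)
  have c0 : 0 ≤ Real.cos θ := Real.cos_nonneg_of_mem_Icc ⟨by linarith, hθ2⟩
  have hsc : 1 ≤ Real.sin θ + Real.cos θ := by
    nlinarith [Real.sin_sq_add_cos_sq θ]
  -- the POVM property of the optimal measurement
  have hPOVM : IsPOVM (![pureState (θ₀ / 2 + Real.pi / 4), 0,
      pureState (θ₀ / 2 - Real.pi / 4)]) := by
    constructor
    · intro x
      fin_cases x
      · exact pure_psd _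
      · exact Matrix.PosSemidef.zero
      · exact pure_psd _
    · rw [Fin.sum_univ_three]
      simp only [Matrix.cons_val_zero, Matrix.cons_val_one, Matrix.head_cons,
        Matrix.cons_val_two, Matrix.tail_cons]
      rw [show θ₀/2 + Real.pi/4 = (θ₀ + Real.pi/2)/2 by ring,
        show θ₀/2 - Real.pi/4 = (θ₀ - Real.pi/2)/2 by ring, pure_half, pure_half]
      ext i j
      fin_cases i <;> fin_cases j <;>
        simp [Matrix.one_apply, Real.cos_add, Real.sin_add, Real.cos_sub, Real.sin_sub] <;>
        ring
  -- the value attained by the optimal measurement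
  have hval : ∑ x : Fin 3, (1 / 3 : ℝ) *
        (((![pureState (θ₀ / 2 + Real.pi / 4), 0, pureState (θ₀ / 2 - Real.pi / 4)] x) *
          (![pureState ((θ₀ + θ) / 2), pureState (θ₀ / 2),
              pureState ((θ₀ - θ) / 2)] x)).trace).re
      = (1 + Real.sin θ) / 3 := by
    rw [Fin.sum_univ_three]
    simp only [Matrix.cons_val_zero, Matrix.cons_val_one, Matrix.head_cons,
      Matrix.cons_val_two, Matrix.tail_cons]
    rw [zero_mul, trace_zero]
    rw [show θ₀/2 + Real.pi/4 = (θ₀ + Real.pi/2)/2 by ring,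
      show θ₀/2 - Real.pi/4 = (θ₀ - Real.pi/2)/2 by ring, pure_half, pure_half,
      pure_half, pure_half]
    simp only [trace, Matrix.diag, Fin.sum_univ_two, Matrix.mul_apply]
    simp [Real.cos_add, Real.sin_add, Real.cos_sub, Real.sin_sub, Complex.add_re,
      Complex.mul_re, Complex.ofReal_re, Complex.ofReal_im, Complex.sin_ofReal_re,
      Complex.cos_ofReal_re]
    linear_combination (Real.sin θ / 3) * Real.sin_sq_add_cos_sq θ₀
  refine ⟨⟨⟨_, hPOVM, hval.symm⟩, ?_⟩, hPOVM, hval⟩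
  -- upper bound
  rintro v ⟨M, ⟨hpsd, hsum⟩, rfl⟩
  have key : ∀ x : Fin 3, (1 / 3 : ℝ) *
      ((M x * (![pureState ((θ₀ + θ) / 2), pureState (θ₀ / 2),
          pureState ((θ₀ - θ) / 2)] x)).trace).re ≤ ((M x * Ymat θ₀ θ).trace).re := by
    intro x
    fin_cases x
    · rw [Ymat, mul_add, Matrix.mul_smul, Matrix.mul_smul, trace_add, trace_smul, trace_smul]
      simp only [Matrix.cons_val_zero, smul_eq_mul, Complex.add_re, Complex.re_ofReal_mul, Fin.zero_eta, Fin.mk_one, Fin.reduceFinMk, Fin.isValue]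
      have := trace_mul_pure_nonneg (hpsd 0) (θ₀/2 - Real.pi/4)
      nlinarith [this, s0]
    · rw [hY2, mul_add, mul_add, Matrix.mul_smul, Matrix.mul_smul, Matrix.mul_smul,
        trace_add, trace_add, trace_smul, trace_smul, trace_smul, mul_one]
      simp only [Matrix.cons_val_one, Matrix.head_cons, Matrix.cons_val_zero, smul_eq_mul, Complex.add_re,
        Complex.re_ofReal_mul, Fin.zero_eta, Fin.mk_one, Fin.reduceFinMk, Fin.isValue]
      have h1 := trace_mul_pure_nonneg (hpsd 1) (θ₀/2 + Real.pi/2)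
      have h2 := trace_re_nonneg (hpsd 1)
      nlinarith [mul_nonneg (by linarith : (0:ℝ) ≤ (Real.sin θ + Real.cos θ - 1)/6) h2,
        mul_nonneg (by linarith [Real.cos_le_one θ] : (0:ℝ) ≤ (1 - Real.cos θ)/3) h1]
    · rw [hY3, mul_add, Matrix.mul_smul, Matrix.mul_smul, trace_add, trace_smul, trace_smul]
      simp only [Matrix.cons_val_two, Matrix.tail_cons, Matrix.head_cons, smul_eq_mul,
        Complex.add_re, Complex.re_ofReal_mul, Fin.zero_eta, Fin.mk_one, Fin.reduceFinMk,
        Fin.isValue]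
      have := trace_mul_pure_nonneg (hpsd 2) (θ₀/2 + Real.pi/4)
      nlinarith [this, s0]
  calc ∑ x : Fin 3, (1 / 3 : ℝ) *
        ((M x * (![pureState ((θ₀ + θ) / 2), pureState (θ₀ / 2),
            pureState ((θ₀ - θ) / 2)] x)).trace).re
      ≤ ∑ x : Fin 3, ((M x * Ymat θ₀ θ).trace).re := Finset.sum_le_sum fun x _ => key x
    _ = (((∑ x : Fin 3, M x) * Ymat θ₀ θ).trace).re := by
        rw [Finset.sum_mul, trace_sum]
        simp [Complex.add_re, Fin.sum_univ_three]
    _ = (1 + Real.sin θ) / 3 := by rw [hsum, one_mul, traceY]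
end
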